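/- arXiv:1110.0253 — 4 statements merged into one kernel-verified Lean document; each statement's English description precedes it below -/
import Mathlib

section
/- For every real x > 0, one has ∫_1^∞ exp(−(x/2)(y + 1/y)) · y^{−1} dy < √(π/(2x)) · e^{−x}. -/
open MeasureTheory Real Set Filter Topology
open scoped ENNReal

/-- For every real `x > 0`,
`∫_1^∞ exp(−(x/2)(y + 1/y)) · y⁻¹ dy < √(π/(2x)) · e^{−x}`. -/
theorem k_bessel_zero_bound (x : ℝ) (hx : 0 < x) :
    (∫ y in Set.Ioi (1 : ℝ), Real.exp (-(x / 2) * (y + 1 / y)) * y⁻¹) <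
      Real.sqrt (Real.pi / (2 * x)) * Real.exp (-x) := by
  set c := Real.exp (-x) / Real.sqrt x with hc
  set φ : ℝ → ℝ := fun y => Real.sqrt x * (Real.sqrt y - (Real.sqrt y)⁻¹) with hφ
  set g : ℝ → ℝ := fun y =>
    c * (Real.exp (-(φ y)^2/2) * (Real.sqrt x * (1/(2*Real.sqrt y) + 1/(2*Real.sqrt y*y)))) with hg
  set f : ℝ → ℝ := fun y => Real.exp (-(x / 2) * (y + 1 / y)) * y⁻¹ with hf
  set e : ℝ → ℝ := fun t => Real.exp (-t^2/2) with he
  set F : ℝ → ℝ := fun y => c * ∫ t in (0:ℝ)..(φ y), e t with hF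
  have hsx : 0 < Real.sqrt x := Real.sqrt_pos.2 hx
  have hcpos : 0 < c := div_pos (Real.exp_pos _) hsx
  have hecont : Continuous e := by
    apply Real.continuous_exp.comp; continuity
  -- derivative of φ
  have hφd : ∀ y ∈ Ici (1:ℝ), HasDerivAt φ
      (Real.sqrt x * (1/(2*Real.sqrt y) + 1/(2*Real.sqrt y*y))) y := by
    intro y hy
    have hy0 : (0:ℝ) < y := lt_of_lt_of_le one_pos hy
    have hsy : 0 < Real.sqrt y := Real.sqrt_pos.2 hy0
    have h1 : HasDerivAt Real.sqrt (1/(2*Real.sqrt y)) y := Real.hasDerivAt_sqrt hy0.ne'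
    have h2 : HasDerivAt (fun y => (Real.sqrt y)⁻¹) (-(1/(2*Real.sqrt y)) / (Real.sqrt y)^2) y :=
      h1.inv hsy.ne'
    have := (h1.sub h2).const_mul (Real.sqrt x)
    refine this.congr_deriv ?_
    rw [Real.sq_sqrt hy0.le]
    field_simp
    ring
  -- key exponential identity
  have hexp : ∀ y : ℝ, 0 < y →
      Real.exp (-(x / 2) * (y + 1 / y)) = Real.exp (-x) * Real.exp (-(φ y)^2/2) := by
    intro y hy0
    have hsy : 0 < Real.sqrt y := Real.sqrt_pos.2 hy0
    have hsq : (φ y)^2 = x * (y + 1/y - 2) := by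
      have h1 : Real.sqrt y * Real.sqrt y = y := Real.mul_self_sqrt hy0.le
      have h2 : Real.sqrt y ≠ 0 := hsy.ne'
      have hm : (2:ℝ)*Real.sqrt y*(Real.sqrt y)⁻¹ = 2 := by
        rw [mul_assoc, mul_inv_cancel₀ h2, mul_one]
      rw [hφ]
      rw [mul_pow, Real.sq_sqrt hx.le, sub_sq, Real.sq_sqrt hy0.le, inv_pow,
        Real.sq_sqrt hy0.le, hm, one_div]
      ring
    rw [← Real.exp_add]
    congr 1
    rw [hsq]; ring
  -- derivative of F
  have hFd : ∀ y ∈ Ici (1:ℝ), HasDerivAt F (g y) y := by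
    intro y hy
    have hG : HasDerivAt (fun u => ∫ t in (0:ℝ)..u, e t) (e (φ y)) (φ y) :=
      intervalIntegral.integral_hasDerivAt_right (hecont.intervalIntegrable _ _)
        hecont.aestronglyMeasurable.stronglyMeasurableAtFilter hecont.continuousAt
    have := (hG.comp y (hφd y hy)).const_mul c
    exact this
  -- g nonneg
  have hgpos : ∀ y ∈ Ioi (1:ℝ), 0 ≤ g y := by
    intro y hy
    have hy0 : (0:ℝ) < y := lt_trans one_pos hy
    have hsy : 0 < Real.sqrt y := Real.sqrt_pos.2 hy0
    rw [hg]
    positivity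
  -- tendsto F
  have hsqrt_top : Tendsto Real.sqrt atTop atTop := by
    apply tendsto_atTop_atTop_of_monotone (fun a b h => Real.sqrt_le_sqrt h)
    intro b
    exact ⟨b^2, by rw [Real.sqrt_sq_eq_abs]; exact le_abs_self b⟩
  have hφtop : Tendsto φ atTop atTop := by
    apply Tendsto.const_mul_atTop hsx
    have h0 : Tendsto (fun y : ℝ => -(Real.sqrt y)⁻¹) atTop (𝓝 (-0)) :=
      (Tendsto.inv_tendsto_atTop hsqrt_top).neg
    rw [neg_zero] at h0
    have := hsqrt_top.atTop_add h0
    simpa [sub_eq_add_neg] using this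
  have hee : e = fun t => Real.exp (-((1:ℝ)/2) * t^2) := by
    funext t; rw [he]; ring_nf
  have heint : IntegrableOn e (Ioi 0) := by
    rw [hee]
    exact (integrable_exp_neg_mul_sq (by norm_num)).integrableOn
  have hIe : ∫ t in Ioi (0:ℝ), e t = Real.sqrt (Real.pi/2) := by
    rw [hee]
    rw [integral_gaussian_Ioi]
    rw [show (Real.pi / ((1:ℝ)/2)) = 4 * (Real.pi/2) by ring]
    rw [show (4 : ℝ) * (Real.pi/2) = 2^2 * (Real.pi/2) by norm_num]
    rw [Real.sqrt_mul (by positivity), Real.sqrt_sq (by norm_num)]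
    ring
  have hFtend : Tendsto F atTop (𝓝 (c * Real.sqrt (Real.pi/2))) := by
    rw [hF]
    apply Tendsto.const_mul
    have := intervalIntegral_tendsto_integral_Ioi (0:ℝ) heint hφtop
    rwa [hIe] at this
  -- integral of g
  have hgint : IntegrableOn g (Ioi 1) := integrableOn_Ioi_deriv_of_nonneg' hFd hgpos hFtend
  have hF1 : F 1 = 0 := by
    have : φ 1 = 0 := by rw [hφ]; simp [Real.sqrt_one]
    simp only [hF]
    rw [this, intervalIntegral.integral_same, mul_zero]
  have hIg : ∫ y in Ioi (1:ℝ), g y = c * Real.sqrt (Real.pi/2) := by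
    rw [integral_Ioi_of_hasDerivAt_of_nonneg' hFd hgpos hFtend, hF1, sub_zero]
  -- RHS equals c * sqrt(pi/2)
  have hRHS : Real.sqrt (Real.pi / (2 * x)) * Real.exp (-x) = c * Real.sqrt (Real.pi/2) := by
    rw [hc, show Real.pi / (2*x) = (Real.pi/2)/x by ring,
      Real.sqrt_div (by positivity) x]
    ring
  -- pointwise strict inequality
  have hlt : ∀ y ∈ Ioi (1:ℝ), f y < g y := by
    intro y hy
    have hy1 : (1:ℝ) < y := hy
    have hy0 : (0:ℝ) < y := lt_trans one_pos hy1
    have hsy : 0 < Real.sqrt y := Real.sqrt_pos.2 hy0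
    have hsy1 : 1 < Real.sqrt y := by
      rw [show (1:ℝ) = Real.sqrt 1 by simp]
      exact Real.sqrt_lt_sqrt one_pos.le hy1
    have hmul : Real.sqrt y * Real.sqrt y = y := Real.mul_self_sqrt hy0.le
    have hE : 0 < Real.exp (-(φ y)^2/2) := Real.exp_pos _
    simp only [hf, hg]
    rw [hexp y hy0]
    have hcx : c * Real.sqrt x = Real.exp (-x) := by
      rw [hc]; field_simp
    have key : y⁻¹ < 1/(2*Real.sqrt y) + 1/(2*Real.sqrt y*y) := by
      have h2y : 2*Real.sqrt y < y + 1 := by nlinarith [sq_nonneg (Real.sqrt y - 1)]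
      have e1 : 1/(2*Real.sqrt y) + 1/(2*Real.sqrt y*y) = (y+1)/(2*Real.sqrt y*y) := by
        field_simp
      have e2 : y⁻¹ = (2*Real.sqrt y)/(2*Real.sqrt y*y) := by
        field_simp
      rw [e1, e2]
      gcongr
    calc Real.exp (-x) * Real.exp (-(φ y)^2/2) * y⁻¹
        < Real.exp (-x) * Real.exp (-(φ y)^2/2) * (1/(2*Real.sqrt y) + 1/(2*Real.sqrt y*y)) := by
          apply mul_lt_mul_of_pos_left key (by positivity)
      _ = c * (Real.exp (-(φ y)^2/2) * (Real.sqrt x * (1/(2*Real.sqrt y) + 1/(2*Real.sqrt y*y)))) := by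
          rw [← hcx]; ring
  -- integrability of f
  have hfmeas : AEStronglyMeasurable f (volume.restrict (Ioi 1)) := by
    have hfm : Measurable f := by
      rw [hf]
      exact (Real.measurable_exp.comp
        (((measurable_id.add (measurable_one.div measurable_id)).const_mul
          (-(x/2))))).mul measurable_inv
    exact hfm.aestronglyMeasurable
  have hfnonneg : ∀ y ∈ Ioi (1:ℝ), 0 ≤ f y := by
    intro y hy
    have hy0 : (0:ℝ) < y := lt_trans one_pos hy
    rw [hf]; positivity
  have hfint : IntegrableOn f (Ioi 1) := by
    apply Integrable.mono' hgint hfmeas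
    filter_upwards [ae_restrict_mem measurableSet_Ioi] with y hy
    rw [Real.norm_of_nonneg (hfnonneg y hy)]
    exact (hlt y hy).le
  -- strict integral inequality
  have hdiff : 0 < ∫ y in Ioi (1:ℝ), (g y - f y) := by
    rw [setIntegral_pos_iff_support_of_nonneg_ae]
    · have hsub : Ioi (1:ℝ) ⊆ Function.support (fun y => g y - f y) := by
        intro y hy
        exact sub_ne_zero_of_ne (hlt y hy).ne'
      calc (0:ℝ≥0∞) < volume (Ioi (1:ℝ)) := by simp
        _ ≤ volume (Function.support (fun y => g y - f y) ∩ Ioi 1) :=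
            measure_mono (subset_inter hsub (subset_refl _))
    · filter_upwards [ae_restrict_mem measurableSet_Ioi] with y hy
      exact sub_nonneg.2 (hlt y hy).le
    · exact hgint.sub hfint
  have : ∫ y in Ioi (1:ℝ), f y < ∫ y in Ioi (1:ℝ), g y := by
    have h := integral_sub hgint hfint
    rw [h] at hdiff
    linarith
  rw [hRHS, ← hIg]
  exact this
end

section
/- For every real z > 0 and every real w, the series Σ_{j=0}^∞ w^j / (z(z+1)⋯(z+j)) converges and ∫_0^1 t^{z−1} e^{−wt} dt = e^{−w} · Σ_{j=0}^∞ w^j / (z(z+1)⋯(z+j)). -/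
open MeasureTheory Real Finset

lemma prod_ge_fact (z : ℝ) (hz : 0 < z) (j : ℕ) :
    z * j.factorial ≤ ∏ i ∈ Finset.range (j + 1), (z + i) := by
  rw [Finset.prod_range_succ']
  simp only [Nat.cast_zero, add_zero]
  rw [mul_comm]
  apply mul_le_mul_of_nonneg_right _ hz.le
  calc (j.factorial : ℝ) = ∏ i ∈ Finset.range j, ((i : ℝ) + 1) := by
        rw [← Finset.prod_range_add_one_eq_factorial]; push_cast
        apply Finset.prod_congr rfl; intro i _; ring
    _ ≤ ∏ i ∈ Finset.range j, (z + ((i : ℝ) + 1)) := by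
        apply Finset.prod_le_prod
        · intro i _; positivity
        · intro i _; linarith
    _ = ∏ i ∈ Finset.range j, (z + (i + 1 : ℕ)) := by
        apply Finset.prod_congr rfl; intro i _; push_cast; ring

lemma prod_pos' (z : ℝ) (hz : 0 < z) (j : ℕ) :
    0 < ∏ i ∈ Finset.range (j + 1), (z + i) := by
  apply Finset.prod_pos
  intro i _
  positivity

lemma summable_aux (z : ℝ) (hz : 0 < z) (w : ℝ) :
    Summable (fun j : ℕ => w ^ j / ∏ i ∈ Finset.range (j + 1), (z + i)) := by
  apply Summable.of_norm_bounded ((Real.summable_pow_div_factorial |w|).mul_left z⁻¹)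
  intro j
  have hp := prod_pos' z hz j
  have hf := prod_ge_fact z hz j
  have hfac : (0:ℝ) < j.factorial := by positivity
  rw [norm_div, Real.norm_eq_abs, Real.norm_eq_abs, abs_pow, abs_of_pos hp]
  calc |w| ^ j / ∏ i ∈ Finset.range (j + 1), (z + i)
      ≤ |w| ^ j / (z * j.factorial) := by
        apply div_le_div_of_nonneg_left (by positivity) (by positivity) hf
    _ = z⁻¹ * (|w| ^ j / j.factorial) := by
        rw [mul_comm z, ← div_div, div_eq_inv_mul (|w| ^ j / _)]

/-- real beta integral with natural second argument -/
lemma real_beta (z : ℝ) (hz : 0 < z) (k : ℕ) :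
    (∫ t in (0:ℝ)..1, t ^ (z - 1) * (1 - t) ^ k) =
      k.factorial / ∏ i ∈ Finset.range (k + 1), (z + i) := by
  have hzc : 0 < (z : ℂ).re := by simpa using hz
  have hbeta := Complex.betaIntegral_eval_nat_add_one_right hzc k
  have heq : Complex.betaIntegral (z : ℂ) ((k : ℂ) + 1) =
      ((∫ t in (0:ℝ)..1, t ^ (z - 1) * (1 - t) ^ k : ℝ) : ℂ) := by
    rw [Complex.betaIntegral, ← intervalIntegral.integral_ofReal]
    apply intervalIntegral.integral_congr
    intro x hx
    rw [Set.uIcc_of_le (by norm_num : (0:ℝ) ≤ 1)] at hx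
    obtain ⟨hx0, hx1⟩ := hx
    have h1 : ((x:ℂ)) ^ ((z:ℂ) - 1) = ((x ^ (z - 1) : ℝ) : ℂ) := by
      rw [Complex.ofReal_cpow hx0, Complex.ofReal_sub, Complex.ofReal_one]
    have h2 : ((1:ℂ) - (x:ℂ)) ^ ((k:ℂ) + 1 - 1) = (((1 - x) ^ k : ℝ) : ℂ) := by
      rw [add_sub_cancel_right, Complex.cpow_natCast]
      push_cast
      ring
    simp only [Complex.ofReal_mul, h1, h2]
  have hprod : ((k.factorial : ℂ) / ∏ j ∈ Finset.range (k + 1), ((z:ℂ) + j)) =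
      (((k.factorial : ℝ) / ∏ i ∈ Finset.range (k + 1), (z + i) : ℝ) : ℂ) := by
    push_cast
    ring
  rw [heq, hprod] at hbeta
  exact_mod_cast hbeta

lemma real_beta_Ioo (z : ℝ) (hz : 0 < z) (k : ℕ) :
    (∫ t in Set.Ioo (0:ℝ) 1, t ^ (z - 1) * (1 - t) ^ k) =
      k.factorial / ∏ i ∈ Finset.range (k + 1), (z + i) := by
  rw [← MeasureTheory.integral_Ioc_eq_integral_Ioo,
    ← intervalIntegral.integral_of_le (by norm_num : (0:ℝ) ≤ 1)]
  exact real_beta z hz k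

lemma integrable_aux (z : ℝ) (hz : 0 < z) (c : ℝ) (k : ℕ) :
    IntegrableOn (fun t : ℝ => t ^ (z - 1) * (c * (1 - t)) ^ k)
      (Set.Ioo (0:ℝ) 1) := by
  have hbase : IntegrableOn (fun t : ℝ => t ^ (z - 1)) (Set.Ioo (0:ℝ) 1) := by
    have := intervalIntegral.intervalIntegrable_rpow' (a := 0) (b := 1) (r := z - 1) (by linarith)
    rw [intervalIntegrable_iff_integrableOn_Ioo_of_le (by norm_num : (0:ℝ) ≤ 1)] at this
    exact this
  have hmeas : AEStronglyMeasurable (fun t : ℝ => t ^ (z - 1) * (c * (1 - t)) ^ k)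
      (volume.restrict (Set.Ioo (0:ℝ) 1)) := by
    apply ContinuousOn.aestronglyMeasurable _ measurableSet_Ioo
    apply ContinuousOn.mul
    · exact continuousOn_id.rpow_const (fun x hx => Or.inl hx.1.ne')
    · exact Continuous.continuousOn (by continuity)
  apply Integrable.mono' (hbase.const_mul (|c| ^ k)) hmeas
  rw [ae_restrict_iff' measurableSet_Ioo]
  filter_upwards with t ht
  obtain ⟨ht0, ht1⟩ := ht
  have h1 : ‖t ^ (z - 1) * (c * (1 - t)) ^ k‖ = t ^ (z - 1) * (|c| * |1 - t|) ^ k := by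
    rw [Real.norm_eq_abs, abs_mul, abs_pow, abs_mul,
      abs_of_nonneg (Real.rpow_nonneg ht0.le _)]
  have h2 : |1 - t| ≤ 1 := by rw [abs_of_nonneg (by linarith)]; linarith
  have h3 : (|c| * |1 - t|) ^ k ≤ |c| ^ k := by
    calc (|c| * |1 - t|) ^ k ≤ (|c| * 1) ^ k := by
          apply pow_le_pow_left₀ (by positivity)
          exact mul_le_mul_of_nonneg_left h2 (abs_nonneg c)
      _ = |c| ^ k := by rw [mul_one]
  rw [h1]
  calc t ^ (z - 1) * (|c| * |1 - t|) ^ k ≤ t ^ (z - 1) * |c| ^ k :=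
        mul_le_mul_of_nonneg_left h3 (Real.rpow_nonneg ht0.le _)
    _ = |c| ^ k * t ^ (z - 1) := mul_comm _ _

/-- For every real `z > 0` and every real `w`, the series
`Σ_{j=0}^∞ w^j / (z(z+1)⋯(z+j))` converges and
`∫_0^1 t^{z−1} e^{−wt} dt = e^{−w} · Σ_{j=0}^∞ w^j / (z(z+1)⋯(z+j))`. -/
theorem lower_incomplete_gamma_series (z : ℝ) (hz : 0 < z) (w : ℝ) :
    Summable (fun j : ℕ => w ^ j / ∏ i ∈ Finset.range (j + 1), (z + i)) ∧
    (∫ t in Set.Ioo (0 : ℝ) 1, t ^ (z - 1) * Real.exp (-w * t)) =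
      Real.exp (-w) * ∑' j : ℕ, w ^ j / ∏ i ∈ Finset.range (j + 1), (z + i) := by
  refine ⟨summable_aux z hz w, ?_⟩
  set μ := volume.restrict (Set.Ioo (0:ℝ) 1) with hμ
  set F : ℕ → ℝ → ℝ := fun k t => t ^ (z - 1) * ((w * (1 - t)) ^ k / k.factorial) with hF
  have hint : ∀ k, Integrable (F k) μ := by
    intro k
    have := (integrable_aux z hz w k).div_const (k.factorial : ℝ)
    apply this.congr
    filter_upwards with t
    simp [hF, mul_div_assoc]
  -- integral of each F k
  have hFval : ∀ k, ∫ t, F k t ∂μ =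
      w ^ k / ∏ i ∈ Finset.range (k + 1), (z + i) := by
    intro k
    have h1 : ∫ t, F k t ∂μ = (w ^ k / k.factorial) *
        ∫ t in Set.Ioo (0:ℝ) 1, t ^ (z - 1) * (1 - t) ^ k := by
      rw [← integral_const_mul, hμ]
      apply integral_congr_ae
      filter_upwards with t
      simp only [hF]
      rw [mul_pow]
      ring
    rw [h1, real_beta_Ioo z hz k]
    have hfac : (k.factorial : ℝ) ≠ 0 := by positivity
    field_simp
  -- integral of norms
  have hFnorm : ∀ k, ∫ t, ‖F k t‖ ∂μ =
      |w| ^ k / ∏ i ∈ Finset.range (k + 1), (z + i) := by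
    intro k
    have h1 : ∫ t, ‖F k t‖ ∂μ = (|w| ^ k / k.factorial) *
        ∫ t in Set.Ioo (0:ℝ) 1, t ^ (z - 1) * (1 - t) ^ k := by
      rw [← integral_const_mul, hμ]
      apply integral_congr_ae
      filter_upwards [ae_restrict_mem measurableSet_Ioo] with t ht
      obtain ⟨ht0, ht1⟩ := ht
      simp only [hF]
      rw [Real.norm_eq_abs, abs_mul, abs_div, abs_pow, abs_mul,
        abs_of_nonneg (Real.rpow_nonneg ht0.le _),
        abs_of_nonneg (by linarith : (0:ℝ) ≤ 1 - t),
        Nat.abs_cast, mul_pow]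
      ring
    rw [h1, real_beta_Ioo z hz k]
    have hfac : (k.factorial : ℝ) ≠ 0 := by positivity
    field_simp
  have hsumnorm : Summable fun k => ∫ t, ‖F k t‖ ∂μ := by
    rw [show (fun k => ∫ t, ‖F k t‖ ∂μ) =
      (fun k => |w| ^ k / ∏ i ∈ Finset.range (k + 1), (z + i)) from funext hFnorm]
    exact summable_aux z hz |w|
  have hswap := MeasureTheory.integral_tsum_of_summable_integral_norm hint hsumnorm
  -- pointwise sum
  have hptw : ∀ t ∈ Set.Ioo (0:ℝ) 1,
      (∑' k, F k t) = t ^ (z - 1) * Real.exp (w * (1 - t)) := by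
    intro t _
    simp only [hF]
    rw [tsum_mul_left]
    congr 1
    rw [Real.exp_eq_exp_ℝ, NormedSpace.exp_eq_tsum_div]
  have hInt2 : (∫ t, (∑' k, F k t) ∂μ) =
      ∫ t in Set.Ioo (0:ℝ) 1, t ^ (z - 1) * Real.exp (w * (1 - t)) := by
    rw [hμ]
    apply integral_congr_ae
    filter_upwards [ae_restrict_mem measurableSet_Ioo] with t ht
    exact hptw t ht
  have hLHS : (∫ t in Set.Ioo (0 : ℝ) 1, t ^ (z - 1) * Real.exp (-w * t)) =
      Real.exp (-w) * ∫ t in Set.Ioo (0:ℝ) 1, t ^ (z - 1) * Real.exp (w * (1 - t)) := by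
    rw [← integral_const_mul]
    apply integral_congr_ae
    filter_upwards with t
    rw [← mul_assoc, mul_comm (Real.exp (-w)) (t ^ (z - 1)), mul_assoc, ← Real.exp_add]
    ring_nf
  rw [hLHS, ← hInt2, ← hswap]
  congr 1
  exact tsum_congr fun k => hFval k
end

section
/- Let a and D be positive real numbers. Then the function H(s) := 2 ζ(2s) a^{−s} + 2 a^{s−1} √π ζ(2s−1) Γ(s − 1/2) / (Γ(s) (D^{1/2}/2)^{2s−1}), defined for complex s near 1/2 with s ≠ 1/2, tends, as s → 1/2, to the limit (2/√a) · (γ + log(D^{1/2}/(8πa))), where γ is the Euler–Mascheroni constant. In particular, the simple poles at s = 1/2 of the two terms (coming from ζ(2s) and from Γ(s − 1/2)) cancel. -/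
open MeasureTheory Real Complex Filter Topology

lemma aux_sqrt_pi_ne : ((Real.sqrt Real.pi : ℝ) : ℂ) ≠ 0 :=
  Complex.ofReal_ne_zero.mpr (Real.sqrt_ne_zero'.mpr Real.pi_pos)

lemma aux_cpow_half : (Real.pi : ℂ) ^ ((1:ℂ)/2) = ((Real.sqrt Real.pi : ℝ) : ℂ) := by
  rw [show ((1:ℂ)/2) = (((1/2) : ℝ) : ℂ) by norm_num, ← Complex.ofReal_cpow Real.pi_pos.le,
    Real.sqrt_eq_rpow]

lemma aux_cpow_neg_half : (Real.pi : ℂ) ^ (-(1:ℂ)/2) = ((Real.sqrt Real.pi : ℝ) : ℂ)⁻¹ := by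
  rw [show (-(1:ℂ)/2) = ((-(1/2) : ℝ) : ℂ) by norm_num, ← Complex.ofReal_cpow Real.pi_pos.le,
    Real.rpow_neg Real.pi_pos.le, Real.sqrt_eq_rpow]
  push_cast
  ring

lemma aux_hasDerivAt_Gammaℝ_one :
    HasDerivAt Complex.Gammaℝ
      ((-(Real.eulerMascheroniConstant + Real.log (4 * Real.pi)) / 2 : ℝ) : ℂ) 1 := by
  have h1 : HasDerivAt (fun s : ℂ => (Real.pi : ℂ) ^ (-s / 2))
      ((Real.pi : ℂ) ^ (-(1:ℂ)/2) * Complex.log Real.pi * (-1/2)) 1 := by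
    simpa using (((hasDerivAt_id (1:ℂ)).neg.div_const 2).const_cpow
      (Or.inl (by exact_mod_cast Real.pi_ne_zero)))
  have h2 : HasDerivAt (fun s : ℂ => Complex.Gamma (s / 2))
      ((-(Real.sqrt Real.pi : ℝ) * ((Real.eulerMascheroniConstant : ℂ) + 2 * Complex.log 2)) * (1/2)) 1 := by
    have := Complex.hasDerivAt_Gamma_one_half.comp (1:ℂ) ((hasDerivAt_id (1:ℂ)).div_const 2)
    simpa [Function.comp_def] using this
  have h := h1.mul h2
  rw [show Complex.Gammaℝ = fun s : ℂ => (Real.pi : ℂ) ^ (-s / 2) * Complex.Gamma (s / 2) from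
    funext Complex.Gammaℝ_def]
  refine h.congr_deriv ?_
  symm
  have hlog2 : Complex.log 2 = ((Real.log 2 : ℝ) : ℂ) := by
    rw [show (2:ℂ) = ((2:ℝ):ℂ) by norm_num, ← Complex.ofReal_log (by norm_num : (0:ℝ) ≤ 2)]
  rw [aux_cpow_neg_half, ← Complex.ofReal_log Real.pi_pos.le, hlog2, Complex.Gamma_one_half_eq]
  have hπ : Real.log (4 * Real.pi) = 2 * Real.log 2 + Real.log Real.pi := by
    rw [Real.log_mul (by norm_num) Real.pi_ne_zero, show (4:ℝ) = 2^2 by norm_num, Real.log_pow]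
    push_cast; ring
  rw [hπ]
  have hs : ((Real.sqrt Real.pi : ℝ) : ℂ) ≠ 0 := aux_sqrt_pi_ne
  push_cast
  field_simp
  rw [aux_cpow_half]
  ring

lemma aux_completedRiemannZeta₀_one :
    completedRiemannZeta₀ 1 =
      ((1 + Real.eulerMascheroniConstant / 2 - Real.log (4 * Real.pi) / 2 : ℝ) : ℂ) := by
  have hcont : Tendsto completedRiemannZeta₀ (𝓝[≠] (1:ℂ)) (𝓝 (completedRiemannZeta₀ 1)) :=
    (differentiable_completedZeta₀.continuous.continuousAt).tendsto.mono_left nhdsWithin_le_nhds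
  have hG : ContinuousAt Complex.Gammaℝ 1 := aux_hasDerivAt_Gammaℝ_one.continuousAt
  have hG1 : Tendsto Complex.Gammaℝ (𝓝[≠] (1:ℂ)) (𝓝 1) := by
    have := hG.tendsto.mono_left (nhdsWithin_le_nhds (s := {(1:ℂ)}ᶜ))
    rwa [Complex.Gammaℝ_one] at this
  have hslope : Tendsto (fun s : ℂ => (Complex.Gammaℝ s - 1) / (s - 1)) (𝓝[≠] (1:ℂ))
      (𝓝 ((-(Real.eulerMascheroniConstant + Real.log (4 * Real.pi)) / 2 : ℝ) : ℂ)) := by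
    have := hasDerivAt_iff_tendsto_slope.mp aux_hasDerivAt_Gammaℝ_one
    refine this.congr (fun s => ?_)
    rw [slope_def_field, Complex.Gammaℝ_one]
  have hinv : Tendsto (fun s : ℂ => 1 / s) (𝓝[≠] (1:ℂ)) (𝓝 1) := by
    have : Tendsto (fun s : ℂ => 1 / s) (𝓝 (1:ℂ)) (𝓝 (1/1)) :=
      (continuousAt_const.div continuousAt_id one_ne_zero).tendsto
    simpa using this.mono_left nhdsWithin_le_nhds
  have hζ := tendsto_riemannZeta_sub_one_div
  have combined : Tendsto
      (fun s : ℂ => Complex.Gammaℝ s * (riemannZeta s - 1 / (s - 1)) +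
        (Complex.Gammaℝ s - 1) / (s - 1) + 1 / s) (𝓝[≠] (1:ℂ))
      (𝓝 (1 * (Real.eulerMascheroniConstant : ℂ) +
        ((-(Real.eulerMascheroniConstant + Real.log (4 * Real.pi)) / 2 : ℝ) : ℂ) + 1)) :=
    ((hG1.mul hζ).add hslope).add hinv
  have heq : ∀ᶠ s : ℂ in 𝓝[≠] (1:ℂ),
      Complex.Gammaℝ s * (riemannZeta s - 1 / (s - 1)) + (Complex.Gammaℝ s - 1) / (s - 1) + 1 / s
        = completedRiemannZeta₀ s := by
    have h0 : ∀ᶠ s : ℂ in 𝓝[≠] (1:ℂ), s ≠ 0 :=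
      (eventually_ne_nhds (by norm_num : (1:ℂ) ≠ 0)).filter_mono nhdsWithin_le_nhds
    have hGne : ∀ᶠ s : ℂ in 𝓝[≠] (1:ℂ), Complex.Gammaℝ s ≠ 0 := by
      have : ∀ᶠ s : ℂ in 𝓝 (1:ℂ), Complex.Gammaℝ s ≠ 0 := by
        refine hG.eventually_ne ?_
        rw [Complex.Gammaℝ_one]; exact one_ne_zero
      exact this.filter_mono nhdsWithin_le_nhds
    filter_upwards [h0, hGne, self_mem_nhdsWithin] with s hs0 hsG hs1
    replace hs1 : s ≠ 1 := hs1
    have hz : riemannZeta s = completedRiemannZeta s / Complex.Gammaℝ s :=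
      riemannZeta_def_of_ne_zero hs0
    have hΛ : completedRiemannZeta s = completedRiemannZeta₀ s - 1 / s - 1 / (1 - s) :=
      completedRiemannZeta_eq s
    have hs1' : s - 1 ≠ 0 := sub_ne_zero.mpr hs1
    have h1s : (1:ℂ) - s ≠ 0 := sub_ne_zero.mpr (Ne.symm hs1)
    have hΛ2 : completedRiemannZeta s = riemannZeta s * Complex.Gammaℝ s :=
      (div_eq_iff hsG).mp hz.symm
    have hΛ₀ : completedRiemannZeta₀ s
        = riemannZeta s * Complex.Gammaℝ s + 1 / s + 1 / (1 - s) := by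
      linear_combination hΛ2 - hΛ
    rw [hΛ₀]
    field_simp
    ring
  have := tendsto_nhds_unique (combined.congr' heq) hcont
  rw [← this]
  push_cast
  ring

noncomputable def csQ (s : ℂ) : ℂ :=
  ((Real.sqrt Real.pi : ℝ) : ℂ) * (Real.pi : ℂ) ^ (s - 1/2) / Complex.Gamma s

noncomputable def csU (a c : ℝ) (s : ℂ) : ℂ :=
  (a : ℂ) ^ (-s) - (a : ℂ) ^ (s - 1) * (c : ℂ) ^ (1 - 2*s)

noncomputable def csΨ (a c : ℝ) (s : ℂ) : ℂ :=
  (completedRiemannZeta₀ (2*s) - 1/(2*s)) * (a : ℂ) ^ (-s) +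
    (completedRiemannZeta₀ (2 - 2*s) - 1/(2 - 2*s)) * (a : ℂ) ^ (s - 1) * (c : ℂ) ^ (1 - 2*s)

lemma half_ne_neg_nat (m : ℕ) : (1/2 : ℂ) ≠ -m := by
  intro h
  have := congrArg Complex.re h
  simp at this
  linarith [Nat.cast_nonneg (α := ℝ) m]

lemma csQ_diff : DifferentiableAt ℂ csQ (1/2) := by
  refine DifferentiableAt.div ?_ (Complex.differentiableAt_Gamma _ half_ne_neg_nat) ?_
  · exact (differentiableAt_const _).mul
      ((differentiableAt_id.sub_const _).const_cpow (Or.inl (by exact_mod_cast Real.pi_ne_zero)))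
  · rw [Complex.Gamma_one_half_eq, aux_cpow_half]; exact aux_sqrt_pi_ne

lemma csQ_half : csQ (1/2) = 1 := by
  rw [csQ, sub_self, Complex.cpow_zero, mul_one, Complex.Gamma_one_half_eq, aux_cpow_half,
    div_self aux_sqrt_pi_ne]

lemma csU_half (a c : ℝ) : csU a c (1/2) = 0 := by
  rw [csU, show ((1:ℂ)/2 - 1) = -(1/2) by ring, show (1 - 2*((1:ℂ)/2)) = 0 by ring,
    Complex.cpow_zero, mul_one, sub_self]

lemma aux_cpow_a_neg_half (a : ℝ) (ha : 0 < a) :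
    (a : ℂ) ^ (-((1:ℂ)/2)) = (((Real.sqrt a)⁻¹ : ℝ) : ℂ) := by
  rw [show (-((1:ℂ)/2)) = ((-(1/2) : ℝ) : ℂ) by norm_num, ← Complex.ofReal_cpow ha.le,
    Real.rpow_neg ha.le, Real.sqrt_eq_rpow]

lemma csU_deriv (a c : ℝ) (ha : 0 < a) (hc : 0 < c) :
    HasDerivAt (csU a c)
      (((2 * Real.log c - 2 * Real.log a) * (Real.sqrt a)⁻¹ : ℝ) : ℂ) (1/2) := by
  have haC : (a : ℂ) ≠ 0 := Complex.ofReal_ne_zero.mpr ha.ne'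
  have hcC : (c : ℂ) ≠ 0 := Complex.ofReal_ne_zero.mpr hc.ne'
  have h1 : HasDerivAt (fun s : ℂ => (a : ℂ) ^ (-s))
      ((a:ℂ) ^ (-((1:ℂ)/2)) * Complex.log a * (-1)) (1/2) := by
    simpa using ((hasDerivAt_id ((1:ℂ)/2)).neg.const_cpow (Or.inl haC))
  have h2 : HasDerivAt (fun s : ℂ => (a : ℂ) ^ (s - 1))
      ((a:ℂ) ^ ((1:ℂ)/2 - 1) * Complex.log a * 1) (1/2) := by
    simpa using (((hasDerivAt_id ((1:ℂ)/2)).sub_const 1).const_cpow (Or.inl haC))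
  have h3 : HasDerivAt (fun s : ℂ => (c : ℂ) ^ (1 - 2*s))
      ((c:ℂ) ^ (1 - 2*((1:ℂ)/2)) * Complex.log c * (-2)) (1/2) := by
    have hinner : HasDerivAt (fun s : ℂ => 1 - 2*s) (-2) ((1:ℂ)/2) := by
      simpa using ((hasDerivAt_id ((1:ℂ)/2)).const_mul 2).const_sub 1
    simpa using (hinner.const_cpow (Or.inl hcC))
  have h := h1.sub (h2.mul h3)
  refine h.congr_deriv ?_
  rw [show ((1:ℂ)/2 - 1) = -((1:ℂ)/2) by ring, show (1 - 2*((1:ℂ)/2)) = 0 by ring,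
    Complex.cpow_zero, aux_cpow_a_neg_half a ha,
    ← Complex.ofReal_log ha.le, ← Complex.ofReal_log hc.le]
  push_cast
  ring

lemma csΨ_cont (a c : ℝ) (ha : 0 < a) (hc : 0 < c) : ContinuousAt (csΨ a c) (1/2) := by
  have haC : (a : ℂ) ≠ 0 := Complex.ofReal_ne_zero.mpr ha.ne'
  have hcC : (c : ℂ) ≠ 0 := Complex.ofReal_ne_zero.mpr hc.ne'
  have hΛ : Continuous completedRiemannZeta₀ := differentiable_completedZeta₀.continuous
  have c1 : ContinuousAt (fun s : ℂ => completedRiemannZeta₀ (2*s)) (1/2) :=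
    (hΛ.comp (continuous_const.mul continuous_id)).continuousAt
  have c2 : ContinuousAt (fun s : ℂ => 1/(2*s)) (1/2) := by
    refine continuousAt_const.div (continuous_const.mul continuous_id).continuousAt ?_
    norm_num
  have c3 : ContinuousAt (fun s : ℂ => completedRiemannZeta₀ (2 - 2*s)) (1/2) :=
    (hΛ.comp (continuous_const.sub (continuous_const.mul continuous_id))).continuousAt
  have c4 : ContinuousAt (fun s : ℂ => 1/(2 - 2*s)) (1/2) := by
    refine continuousAt_const.div
      (continuous_const.sub (continuous_const.mul continuous_id)).continuousAt ?_
    norm_num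
  have c5 : ContinuousAt (fun s : ℂ => (a:ℂ) ^ (-s)) (1/2) :=
    (differentiableAt_id.neg.const_cpow (Or.inl haC)).continuousAt
  have c6 : ContinuousAt (fun s : ℂ => (a:ℂ) ^ (s - 1)) (1/2) :=
    ((differentiableAt_id.sub_const _).const_cpow (Or.inl haC)).continuousAt
  have c7 : ContinuousAt (fun s : ℂ => (c:ℂ) ^ (1 - 2*s)) (1/2) := by
    refine DifferentiableAt.continuousAt (𝕜 := ℂ) ?_
    exact ((differentiableAt_const _).sub ((differentiableAt_const _).mul differentiableAt_id)).const_cpow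
      (Or.inl hcC)
  exact ((c1.sub c2).mul c5).add (((c3.sub c4).mul c6).mul c7)

lemma csΨ_half (a c : ℝ) (ha : 0 < a) :
    csΨ a c (1/2) =
      (((Real.eulerMascheroniConstant - Real.log (4 * Real.pi)) * (Real.sqrt a)⁻¹ : ℝ) : ℂ) := by
  rw [csΨ, show (2*((1:ℂ)/2)) = 1 by norm_num, show ((2:ℂ) - 1) = 1 by norm_num,
    show ((1:ℂ) - 1) = 0 by norm_num, show ((1:ℂ)/2 - 1) = -((1:ℂ)/2) by norm_num,
    Complex.cpow_zero, mul_one, aux_cpow_a_neg_half a ha, aux_completedRiemannZeta₀_one]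
  push_cast
  ring

lemma aux_identity (X Y t g gh pa pb pc w s : ℂ) (ht : t ≠ 0) (hg : g ≠ 0) (hgh : gh ≠ 0)
    (hpc : pc ≠ 0) (hw : w ≠ 0) (h2s0 : 2*s ≠ 0) (h12s : (1:ℂ) - 2*s ≠ 0)
    (h22s : (2:ℂ) - 2*s ≠ 0) (h2s1 : 2*s - 1 ≠ 0) (hs12 : s - 1/2 ≠ 0) :
    2 * ((X - 1/(2*s) - 1/(1 - 2*s)) / (w⁻¹ * t⁻¹ * g)) * pa +
      2 * pb * w * ((Y - 1/(2 - 2*s) - 1/(2*s - 1)) / (t⁻¹ * gh)) * gh / (g * pc)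
    = 2 * (w * t / g) * ((X - 1/(2*s)) * pa + (Y - 1/(2 - 2*s)) * pb * pc⁻¹) +
      w * t / g * (pa - pb * pc⁻¹) / (s - 1/2) := by
  have stage1 : ∀ BX BY : ℂ,
      2 * (BX / (w⁻¹ * t⁻¹ * g)) * pa + 2 * pb * w * (BY / (t⁻¹ * gh)) * gh / (g * pc)
        = w * t / g * (2 * BX * pa + 2 * (pb * pc⁻¹) * BY) := by
    intro BX BY
    field_simp
  rw [stage1]
  have stage2 : ∀ qa qb : ℂ, 2 * (X - 1/(2*s) - 1/(1 - 2*s)) * qa +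
        2 * qb * (Y - 1/(2 - 2*s) - 1/(2*s - 1))
      = 2 * ((X - 1/(2*s)) * qa + (Y - 1/(2 - 2*s)) * qb) +
        (qa - qb) / (s - 1/2) := by
    intro qa qb
    rw [show (1:ℂ) - 2*s = -(2*s - 1) by ring, div_neg,
      show (s - 1/2 : ℂ) = (2*s - 1)/2 by ring, div_div_eq_mul_div]
    ring
  rw [stage2 pa (pb * pc⁻¹)]
  ring

/-- The two non-Bessel terms in the Chowla–Selberg expansion have a removable singularity at
`s = 1/2`: as `s → 1/2` (with `s ≠ 1/2`), the function
`H(s) = 2 ζ(2s) a^{−s} + 2 a^{s−1} √π ζ(2s−1) Γ(s−1/2) / (Γ(s) (D^{1/2}/2)^{2s−1})`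
tends to `(2/√a)(γ + log(D^{1/2}/(8πa)))`. -/
theorem chowla_selberg_main_term_limit (a D : ℝ) (ha : 0 < a) (hD : 0 < D) :
    Tendsto
      (fun s : ℂ =>
        2 * riemannZeta (2 * s) * (a : ℂ) ^ (-s) +
          2 * (a : ℂ) ^ (s - 1) * (Real.sqrt Real.pi : ℂ) * riemannZeta (2 * s - 1) *
            Complex.Gamma (s - 1 / 2) /
            (Complex.Gamma s * ((Real.sqrt D / 2 : ℝ) : ℂ) ^ (2 * s - 1)))
      (𝓝[≠] (1 / 2 : ℂ))
      (𝓝 (((2 / Real.sqrt a) *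
        (Real.eulerMascheroniConstant + Real.log (Real.sqrt D / (8 * Real.pi * a))) : ℝ) : ℂ)) := by
  have hπC : (Real.pi : ℂ) ≠ 0 := by exact_mod_cast Real.pi_ne_zero
  set c : ℝ := Real.sqrt D / 2 with hcdef
  have hc : 0 < c := by positivity
  have haC : (a : ℂ) ≠ 0 := Complex.ofReal_ne_zero.mpr ha.ne'
  have hcC : (c : ℂ) ≠ 0 := Complex.ofReal_ne_zero.mpr hc.ne'
  have hsa : Real.sqrt a ≠ 0 := Real.sqrt_ne_zero'.mpr ha
  have h12re : ((1:ℂ)/2).re = 1/2 := by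
    rw [show ((1:ℂ)/2) = ((1/2:ℝ):ℂ) by norm_num, Complex.ofReal_re]
  -- Eventual equality with the regularized form
  have hev : ∀ᶠ s : ℂ in 𝓝[≠] (1/2 : ℂ),
      2 * riemannZeta (2 * s) * (a : ℂ) ^ (-s) +
          2 * (a : ℂ) ^ (s - 1) * (Real.sqrt Real.pi : ℂ) * riemannZeta (2 * s - 1) *
            Complex.Gamma (s - 1 / 2) / (Complex.Gamma s * (c : ℂ) ^ (2 * s - 1))
        = 2 * csQ s * csΨ a c s + csQ s * csU a c s / (s - 1/2) := by
    have hball : Metric.ball ((1:ℂ)/2) (1/4) ∈ 𝓝[≠] ((1:ℂ)/2) :=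
      nhdsWithin_le_nhds (Metric.ball_mem_nhds _ (by norm_num))
    filter_upwards [self_mem_nhdsWithin, hball] with s hs hb
    replace hs : s ≠ 1/2 := hs
    rw [Metric.mem_ball, Complex.dist_eq] at hb
    have hre2' : (s - 1/2).re = s.re - 1/2 := by rw [Complex.sub_re, h12re]
    have hrange : 1/4 < s.re ∧ s.re < 3/4 := by
      have h1 := (abs_lt.mp (lt_of_le_of_lt (Complex.abs_re_le_norm _) hb))
      rw [hre2'] at h1
      constructor <;> linarith [h1.1, h1.2]
    have hspos : 0 < s.re := by linarith [hrange.1]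
    have hΓs : Complex.Gamma s ≠ 0 := Complex.Gamma_ne_zero_of_re_pos hspos
    have hs0 : s ≠ 0 := by
      intro h; rw [h] at hspos; simp at hspos
    have hs1 : s ≠ 1 := by
      intro h; rw [h] at hrange; norm_num [Complex.one_re] at hrange
    have h2s0 : 2*s ≠ 0 := mul_ne_zero two_ne_zero hs0
    have hs12 : s - 1/2 ≠ 0 := sub_ne_zero.mpr hs
    have h2s1 : 2*s - 1 ≠ 0 := fun h => hs (by linear_combination h/2)
    have h12s : (1:ℂ) - 2*s ≠ 0 := fun h => hs (by linear_combination -h/2)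
    have h22s : (2:ℂ) - 2*s ≠ 0 := fun h => hs1 (by linear_combination -h/2)
    have hΓargs : ∀ m : ℕ, s - 1/2 ≠ -(m:ℂ) := by
      intro m hm
      rcases Nat.eq_zero_or_pos m with h0 | h1
      · rw [h0] at hm
        push_cast at hm
        exact hs12 (by simpa using hm)
      · have hre := congrArg Complex.re hm
        rw [hre2'] at hre
        simp only [Complex.neg_re, Complex.natCast_re] at hre
        have hm1 : (1:ℝ) ≤ (m:ℝ) := by exact_mod_cast h1
        linarith [hrange.1]
    have hΓh : Complex.Gamma (s - 1/2) ≠ 0 := Complex.Gamma_ne_zero hΓargs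
    have ht : (Real.pi:ℂ) ^ (s - 1/2) ≠ 0 := by
      simp [Complex.cpow_eq_zero_iff, hπC]
    have hpc : (c:ℂ) ^ (2*s - 1) ≠ 0 := by
      simp [Complex.cpow_eq_zero_iff, hcC]
    have hGR1 : Complex.Gammaℝ (2*s)
        = ((Real.sqrt Real.pi : ℝ):ℂ)⁻¹ * ((Real.pi:ℂ) ^ (s - 1/2))⁻¹ * Complex.Gamma s := by
      rw [Complex.Gammaℝ_def, show (-(2*s)/2 : ℂ) = (-(1:ℂ)/2) + -(s - 1/2) by ring,
        Complex.cpow_add _ _ hπC, show (2*s/2 : ℂ) = s by ring, aux_cpow_neg_half,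
        Complex.cpow_neg]
    have hGR2 : Complex.Gammaℝ (2*s - 1)
        = ((Real.pi:ℂ) ^ (s - 1/2))⁻¹ * Complex.Gamma (s - 1/2) := by
      rw [Complex.Gammaℝ_def, show (-(2*s - 1)/2 : ℂ) = -(s - 1/2) by ring,
        show ((2*s - 1)/2 : ℂ) = s - 1/2 by ring, Complex.cpow_neg]
    have hFE : completedRiemannZeta (2*s - 1) = completedRiemannZeta (2 - 2*s) := by
      have h := completedRiemannZeta_one_sub (2*s - 1)
      rw [show (1 - (2*s - 1) : ℂ) = 2 - 2*s by ring] at h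
      exact h.symm
    have hcinv : (c:ℂ) ^ (1 - 2*s) = ((c:ℂ) ^ (2*s - 1))⁻¹ := by
      rw [show (1 - 2*s : ℂ) = -(2*s - 1) by ring, Complex.cpow_neg]
    rw [riemannZeta_def_of_ne_zero h2s0, riemannZeta_def_of_ne_zero h2s1, hGR1, hGR2, hFE,
      completedRiemannZeta_eq (2*s), completedRiemannZeta_eq (2 - 2*s),
      show (1 - (2 - 2*s) : ℂ) = 2*s - 1 by ring]
    simp only [csQ, csU, csΨ]
    rw [hcinv]
    exact aux_identity _ _ _ _ _ _ _ _ _ s ht hΓs hΓh hpc aux_sqrt_pi_ne h2s0 h12s h22s h2s1 hs12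
  -- limits of the two pieces
  have hQc : ContinuousAt csQ (1/2) := csQ_diff.continuousAt
  have hΨc := csΨ_cont a c ha hc
  have hA : Tendsto (fun s : ℂ => 2 * csQ s * csΨ a c s) (𝓝[≠] (1/2:ℂ))
      (𝓝 (2 * csQ (1/2) * csΨ a c (1/2))) :=
    (((continuousAt_const.mul hQc).mul hΨc).tendsto).mono_left nhdsWithin_le_nhds
  rw [csQ_half, csΨ_half a c ha, mul_one] at hA
  have hDer : HasDerivAt (fun s : ℂ => csQ s * csU a c s)
      (((2 * Real.log c - 2 * Real.log a) * (Real.sqrt a)⁻¹ : ℝ) : ℂ) (1/2) := by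
    refine (csQ_diff.hasDerivAt.mul (csU_deriv a c ha hc)).congr_deriv ?_
    rw [csU_half, csQ_half, mul_zero, zero_add, one_mul]
  have hB : Tendsto (fun s : ℂ => csQ s * csU a c s / (s - 1/2)) (𝓝[≠] (1/2:ℂ))
      (𝓝 (((2 * Real.log c - 2 * Real.log a) * (Real.sqrt a)⁻¹ : ℝ) : ℂ)) := by
    have h := hasDerivAt_iff_tendsto_slope.mp hDer
    refine h.congr fun s => ?_
    rw [slope_def_field, csU_half, mul_zero, sub_zero]
  have htot := (hA.add hB).congr' (EventuallyEq.symm hev)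
  have hreal : (2 / Real.sqrt a) *
        (Real.eulerMascheroniConstant + Real.log (Real.sqrt D / (8 * Real.pi * a)))
      = 2 * ((Real.eulerMascheroniConstant - Real.log (4 * Real.pi)) * (Real.sqrt a)⁻¹)
        + (2 * Real.log c - 2 * Real.log a) * (Real.sqrt a)⁻¹ := by
    have h8 : Real.sqrt D / (8 * Real.pi * a) = c / (4 * Real.pi * a) := by
      rw [hcdef]; ring
    rw [h8, Real.log_div hc.ne' (by positivity),
      Real.log_mul (by positivity : (4 * Real.pi : ℝ) ≠ 0) ha.ne']
    field_simp
    ring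
  have hfin : (((2 / Real.sqrt a) *
        (Real.eulerMascheroniConstant + Real.log (Real.sqrt D / (8 * Real.pi * a))) : ℝ) : ℂ)
      = ((2 * ((Real.eulerMascheroniConstant - Real.log (4 * Real.pi)) * (Real.sqrt a)⁻¹)
        + (2 * Real.log c - 2 * Real.log a) * (Real.sqrt a)⁻¹ : ℝ) : ℂ) :=
    Complex.ofReal_inj.mpr hreal
  have hsplit : ((2 * ((Real.eulerMascheroniConstant - Real.log (4 * Real.pi)) * (Real.sqrt a)⁻¹)
        + (2 * Real.log c - 2 * Real.log a) * (Real.sqrt a)⁻¹ : ℝ) : ℂ)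
      = 2 * (((Real.eulerMascheroniConstant - Real.log (4 * Real.pi)) * (Real.sqrt a)⁻¹ : ℝ) : ℂ)
        + (((2 * Real.log c - 2 * Real.log a) * (Real.sqrt a)⁻¹ : ℝ) : ℂ) := by
    rw [Complex.ofReal_add, Complex.ofReal_mul, Complex.ofReal_ofNat]
  rw [hfin, hsplit]
  exact htot
end

section
/- As n → ∞ through the positive integers, Σ_{a=1}^{n} Σ_{b=0}^{a} gcd(a,b) ∼ n² log n / (2 ζ(2)), i.e. the ratio of the two sides tends to 1; here ζ(2) = π²/6, so the right-hand side equals 3 n² log n / π². -/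
open Filter Topology Finset

open ArithmeticFunction

open scoped LSeries.notation

open scoped ArithmeticFunction.Moebius

lemma swapDvd {M : Type*} [AddCommMonoid M] (f : ℕ → ℕ → M) (n : ℕ) :
    ∑ a ∈ Icc 1 n, ∑ d ∈ a.divisors, f d (a / d) =
      ∑ d ∈ Icc 1 n, ∑ k ∈ Icc 1 (n / d), f d k := by
  rw [Finset.sum_sigma', Finset.sum_sigma']
  refine Finset.sum_nbij' (fun x => ⟨x.2, x.1 / x.2⟩) (fun x => ⟨x.1 * x.2, x.1⟩) ?_ ?_ ?_ ?_ ?_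
  · rintro ⟨a, d⟩ h
    simp only [Finset.mem_sigma, Finset.mem_Icc, Nat.mem_divisors] at h ⊢
    obtain ⟨⟨ha1, han⟩, hd, ha0⟩ := h
    have hd1 : 1 ≤ d := Nat.pos_of_mem_divisors (Nat.mem_divisors.2 ⟨hd, ha0⟩)
    refine ⟨⟨hd1, le_trans (Nat.le_of_dvd (by omega) hd) han⟩,
      Nat.one_le_div_iff (by omega) |>.2 (Nat.le_of_dvd (by omega) hd) , ?_⟩
    exact Nat.div_le_div_right han
  · rintro ⟨d, k⟩ h
    simp only [Finset.mem_sigma, Finset.mem_Icc, Nat.mem_divisors] at h ⊢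
    obtain ⟨⟨hd1, hdn⟩, hk1, hkn⟩ := h
    have hdk : d * k ≤ n := by
      have := (Nat.le_div_iff_mul_le (by omega : 0 < d)).1 hkn
      nlinarith
    exact ⟨⟨by nlinarith, hdk⟩, Dvd.intro k rfl, by positivity⟩
  · rintro ⟨a, d⟩ h
    simp only [Finset.mem_sigma, Finset.mem_Icc, Nat.mem_divisors] at h
    obtain ⟨⟨ha1, han⟩, hd, ha0⟩ := h
    simp [Nat.mul_div_cancel' hd]
  · rintro ⟨d, k⟩ h
    simp only [Finset.mem_sigma, Finset.mem_Icc, Nat.mem_divisors] at h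
    obtain ⟨⟨hd1, hdn⟩, hk1, hkn⟩ := h
    simp [Nat.mul_div_cancel_left _ (by omega : 0 < d)]
  · rintro ⟨a, d⟩ h
    simp only [Finset.mem_sigma, Finset.mem_Icc, Nat.mem_divisors] at h
    obtain ⟨⟨ha1, han⟩, hd, ha0⟩ := h
    simp [Nat.mul_div_cancel' hd]

lemma gcdRow (a : ℕ) (ha : 1 ≤ a) :
    ∑ b ∈ range (a + 1), Nat.gcd a b =
      a + ∑ d ∈ a.divisors, Nat.totient d * (a / d) := by
  have hins : range (a + 1) = insert 0 (Icc 1 a) := by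
    ext x; simp [Nat.lt_succ_iff]; omega
  rw [hins, Finset.sum_insert (by simp), Nat.gcd_zero_right]
  congr 1
  have hrow : ∀ b ∈ Icc 1 a, Nat.gcd a b = ∑ d ∈ a.divisors, if d ∣ b then Nat.totient d else 0 := by
    intro b hb
    simp only [mem_Icc] at hb
    have h1 : (Nat.gcd a b).divisors = a.divisors.filter (· ∣ b) := by
      ext d
      simp only [Nat.mem_divisors, mem_filter, Nat.dvd_gcd_iff]
      constructor
      · rintro ⟨⟨h1, h2⟩, h3⟩; exact ⟨⟨h1, by omega⟩, h2⟩
      · rintro ⟨⟨h1, h2⟩, h3⟩; exact ⟨⟨h1, h3⟩, Nat.gcd_ne_zero_left (by omega)⟩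
    rw [← Nat.sum_totient (Nat.gcd a b), h1, Finset.sum_filter]
  rw [Finset.sum_congr rfl hrow, Finset.sum_comm]
  refine Finset.sum_congr rfl fun d hd => ?_
  rw [← Finset.sum_filter, Finset.sum_const, smul_eq_mul, mul_comm]
  congr 1
  have : Icc 1 a = Ioc 0 a := by ext x; simp; omega
  rw [this]
  exact Nat.Ioc_filter_dvd_card_eq_div a d

lemma totientInv (d : ℕ) (hd : 0 < d) :
    (Nat.totient d : ℝ) = ∑ e ∈ d.divisors, (moebius e : ℝ) * ((d / e : ℕ) : ℝ) := by
  have h := (sum_eq_iff_sum_mul_moebius_eq (R := ℝ)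
      (f := fun i => (Nat.totient i : ℝ)) (g := fun n => (n : ℝ))).1 ?_ d hd
  · rw [← h, ← Nat.sum_divisorsAntidiagonal (fun i j => (moebius i : ℝ) * (j : ℝ))]
  · intro n hn
    rw [← Nat.cast_sum]
    exact_mod_cast congrArg (Nat.cast (R := ℝ)) (Nat.sum_totient n)

lemma moebiusHasSum :
    HasSum (fun e : ℕ => (moebius e : ℝ) / (e : ℝ) ^ 2) (6 / Real.pi ^ 2) := by
  have hsum : LSeriesSummable ↗μ 2 := by
    exact ArithmeticFunction.LSeriesSummable_moebius_iff.2 (by norm_num)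
  have hpi : (Real.pi : ℂ) ^ 2 ≠ 0 := by
    simpa using Complex.ofReal_ne_zero.2 Real.pi_ne_zero
  have hval : LSeries ↗μ 2 = 6 / (Real.pi : ℂ) ^ 2 := by
    have h1 := ArithmeticFunction.LSeries_zeta_mul_Lseries_moebius (s := 2) (by norm_num)
    rw [ArithmeticFunction.LSeries_zeta_eq_riemannZeta (by norm_num), riemannZeta_two] at h1
    field_simp at h1 ⊢
    linear_combination h1
  have hHS : HasSum (fun n => LSeries.term ↗μ 2 n) ((6 : ℂ) / (Real.pi : ℂ) ^ 2) := by
    rw [← hval]; exact hsum.hasSum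
  have hterm : ∀ n : ℕ, LSeries.term ↗μ 2 n = (((moebius n : ℝ) / (n : ℝ) ^ 2 : ℝ) : ℂ) := by
    intro n
    rcases eq_or_ne n 0 with rfl | hn
    · simp [LSeries.term]
    · rw [LSeries.term_of_ne_zero hn]
      push_cast
      rw [Complex.cpow_ofNat]
  rw [show ((6 : ℂ) / (Real.pi : ℂ) ^ 2) = ((6 / Real.pi ^ 2 : ℝ) : ℂ) by push_cast; ring] at hHS
  exact Complex.hasSum_ofReal.1 (by simpa only [hterm] using hHS)

lemma telescopeHasSum (n : ℕ) (hn : 1 ≤ n) :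
    HasSum (fun i : ℕ => 1 / ((n : ℝ) + i) - 1 / ((n : ℝ) + i + 1)) (1 / n) := by
  have hpos : ∀ i : ℕ, (0:ℝ) < (n : ℝ) + i := fun i => by positivity
  have hnonneg : ∀ i : ℕ, 0 ≤ 1 / ((n : ℝ) + i) - 1 / ((n : ℝ) + i + 1) := by
    intro i
    have := hpos i
    rw [sub_nonneg]
    exact one_div_le_one_div_of_le (hpos i) (by linarith)
  have hpart : ∀ k : ℕ, ∑ i ∈ range k, (1 / ((n : ℝ) + i) - 1 / ((n : ℝ) + i + 1))
      = 1 / n - 1 / (n + k) := by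
    intro k
    have := Finset.sum_range_sub' (f := fun i : ℕ => 1 / ((n : ℝ) + i)) k
    simp only [Nat.cast_zero, add_zero] at this
    rw [← this]
    refine Finset.sum_congr rfl fun i _ => ?_
    push_cast; ring_nf
  have hsum : Summable (fun i : ℕ => 1 / ((n : ℝ) + i) - 1 / ((n : ℝ) + i + 1)) := by
    refine summable_of_sum_range_le (c := 1 / (n:ℝ)) hnonneg (fun k => ?_)
    rw [hpart k]
    have : (0:ℝ) ≤ 1 / ((n:ℝ) + k) := by positivity
    linarith
  rw [hsum.hasSum_iff_tendsto_nat]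
  simp only [hpart]
  have h0 : Filter.Tendsto (fun k : ℕ => 1 / ((n : ℝ) + k)) Filter.atTop (nhds 0) := by
    have hat : Filter.Tendsto (fun k : ℕ => (n : ℝ) + k) Filter.atTop Filter.atTop :=
      Filter.tendsto_atTop_add_const_left _ _ tendsto_natCast_atTop_atTop
    simp only [one_div]
    exact hat.inv_tendsto_atTop
  simpa using (tendsto_const_nhds.sub h0)

lemma harmonicBound (m : ℕ) (hm : 1 ≤ m) :
    |∑ k ∈ Icc 1 m, (1:ℝ) / k - Real.log m| ≤ 1 := by
  have hH : (harmonic m : ℝ) = ∑ k ∈ Icc 1 m, (1:ℝ) / k := by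
    rw [harmonic_eq_sum_Icc]; push_cast; simp [one_div]
  have h1 := log_add_one_le_harmonic m
  have h2 := harmonic_le_one_add_log m
  push_cast at h1
  have h3 : Real.log m ≤ Real.log ((m:ℝ) + 1) := by
    apply Real.log_le_log (by positivity); linarith
  rw [← hH, abs_le]
  constructor <;> linarith

lemma zetaPartial (n : ℕ) : ∑ e ∈ Icc 1 n, (1:ℝ) / (e:ℝ) ^ 2 ≤ Real.pi ^ 2 / 6 := by
  rw [← hasSum_zeta_two.tsum_eq]
  exact Summable.sum_le_tsum _ (fun e _ => by positivity) hasSum_zeta_two.summable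

lemma logSummable : Summable (fun e : ℕ => Real.log e / (e:ℝ) ^ 2) := by
  have hs : Summable (fun e : ℕ => 2 * (e:ℝ) ^ (-(3/2) : ℝ)) :=
    Summable.mul_left 2 (Real.summable_nat_rpow.2 (by norm_num))
  refine Summable.of_nonneg_of_le (fun e => ?_) (fun e => ?_) hs
  · rcases Nat.eq_zero_or_pos e with rfl | he
    · simp
    · have : (1:ℝ) ≤ e := by exact_mod_cast he
      positivity
  · rcases Nat.eq_zero_or_pos e with rfl | he
    · simp
    · have h1 : (1:ℝ) ≤ (e:ℝ) := by exact_mod_cast he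
      have hlog : Real.log e ≤ 2 * Real.sqrt e := by
        have hd := Real.log_le_sub_one_of_pos (x := Real.sqrt e) (by positivity)
        have hsq : Real.log (Real.sqrt e) = Real.log e / 2 := Real.log_sqrt (by positivity)
        nlinarith [Real.sqrt_nonneg (e:ℝ)]
      calc Real.log e / (e:ℝ) ^ 2 ≤ 2 * Real.sqrt e / (e:ℝ) ^ 2 := by gcongr
        _ = 2 * (e:ℝ) ^ (-(3/2) : ℝ) := by
            rw [Real.sqrt_eq_rpow, ← Real.rpow_natCast (e:ℝ) 2,
              div_eq_mul_inv, mul_assoc, ← Real.rpow_neg (by positivity),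
              ← Real.rpow_add (by linarith)]
            norm_num

lemma moebiusPartial (n : ℕ) (hn : 1 ≤ n) :
    |(∑ e ∈ Icc 1 n, (moebius e : ℝ) / (e:ℝ) ^ 2) - 6 / Real.pi ^ 2| ≤ 1 / (n:ℝ) := by
  set f : ℕ → ℝ := fun e => (moebius e : ℝ) / (e:ℝ) ^ 2 with hf_def
  have hf := moebiusHasSum
  have hs := hf.summable
  have h0 : f 0 = 0 := by simp [hf_def]
  have hpart : ∑ i ∈ range (n + 1), f i = ∑ e ∈ Icc 1 n, f e := by
    have : range (n + 1) = insert 0 (Icc 1 n) := by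
      ext x; simp [Nat.lt_succ_iff]; omega
    rw [this, Finset.sum_insert (by simp), h0, zero_add]
  have heq := Summable.sum_add_tsum_nat_add (n + 1) hs
  rw [hf.tsum_eq, hpart] at heq
  have htail : |∑' i : ℕ, f (i + (n + 1))| ≤ 1 / n := by
    have hb := telescopeHasSum n hn
    have hsb := hb.summable
    have hfs : Summable (fun i : ℕ => f (i + (n + 1))) := (summable_nat_add_iff (n+1)).2 hs
    calc |∑' i : ℕ, f (i + (n + 1))| ≤ ∑' i : ℕ, |f (i + (n + 1))| := by
          simpa only [Real.norm_eq_abs] using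
            norm_tsum_le_tsum_norm (f := fun i : ℕ => f (i + (n + 1)))
              (by simpa only [Real.norm_eq_abs] using hfs.abs)
      _ ≤ ∑' i : ℕ, (1 / ((n : ℝ) + i) - 1 / ((n : ℝ) + i + 1)) := by
          refine Summable.tsum_le_tsum (fun i => ?_) hfs.abs hsb
          have hmu : |(moebius (i + (n+1)) : ℝ)| ≤ 1 := by
            have := abs_moebius_le_one (n := i + (n+1))
            exact_mod_cast this
          have hcast : ((i + (n + 1) : ℕ) : ℝ) = (n:ℝ) + i + 1 := by push_cast; ring
          have hposni : (0:ℝ) < (n:ℝ) + i := by positivity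
          have h1 : |f (i + (n + 1))| ≤ 1 / ((n:ℝ) + i + 1) ^ 2 := by
            rw [hf_def, abs_div, abs_pow, abs_of_nonneg (by positivity : (0:ℝ) ≤ ((i + (n+1):ℕ):ℝ)), hcast]
            gcongr
          have h2 : (1:ℝ) / ((n:ℝ) + i + 1) ^ 2 ≤ 1 / (((n:ℝ) + i) * ((n:ℝ) + i + 1)) := by
            apply one_div_le_one_div_of_le (by positivity)
            nlinarith
          have h3 : (1:ℝ) / (((n:ℝ) + i) * ((n:ℝ) + i + 1)) = 1 / ((n : ℝ) + i) - 1 / ((n : ℝ) + i + 1) := by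
            field_simp
            ring
          linarith
      _ = 1 / n := hb.tsum_eq
  have : ∑ e ∈ Icc 1 n, f e - 6 / Real.pi ^ 2 = -(∑' i : ℕ, f (i + (n + 1))) := by linarith
  rw [hf_def] at this ⊢
  rw [this, abs_neg]
  exact htail

noncomputable def Asum (n : ℕ) : ℝ := ∑ d ∈ Icc 1 n, (Nat.totient d : ℝ) / (d:ℝ) ^ 2

lemma AsumEq (n : ℕ) : Asum n =
    ∑ e ∈ Icc 1 n, ((moebius e : ℝ) / (e:ℝ) ^ 2) * ∑ k ∈ Icc 1 (n / e), (1:ℝ) / k := by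
  have h1 : Asum n = ∑ d ∈ Icc 1 n, ∑ e ∈ d.divisors,
      (fun (e k : ℕ) => (moebius e : ℝ) * (k:ℝ) / ((e:ℝ) * (k:ℝ)) ^ 2) e (d / e) := by
    rw [Asum]
    refine Finset.sum_congr rfl fun d hd => ?_
    simp only [mem_Icc] at hd
    rw [totientInv d (by omega), Finset.sum_div]
    refine Finset.sum_congr rfl fun e he => ?_
    have hdvd := (Nat.mem_divisors.1 he).1
    have hde : (e:ℝ) * ((d / e : ℕ) : ℝ) = (d:ℝ) := by
      exact_mod_cast congrArg (Nat.cast (R := ℝ)) (Nat.mul_div_cancel' hdvd)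
    show _ = (moebius e : ℝ) * ((d / e : ℕ):ℝ) / ((e:ℝ) * ((d / e : ℕ):ℝ)) ^ 2
    rw [hde]
  rw [h1, swapDvd (fun (e k : ℕ) => (moebius e : ℝ) * (k:ℝ) / ((e:ℝ) * (k:ℝ)) ^ 2) n]
  refine Finset.sum_congr rfl fun e he => ?_
  simp only [mem_Icc] at he
  rw [Finset.mul_sum]
  refine Finset.sum_congr rfl fun k hk => ?_
  simp only [mem_Icc] at hk
  have he0 : (e:ℝ) ≠ 0 := Nat.cast_ne_zero.2 (by omega)
  have hk0 : (k:ℝ) ≠ 0 := Nat.cast_ne_zero.2 (by omega)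
  field_simp

lemma AsumBound : ∃ C : ℝ, 0 ≤ C ∧ ∀ n : ℕ, 1 ≤ n →
    |Asum n - (6 / Real.pi ^ 2) * Real.log n| ≤ C := by
  set CL : ℝ := ∑' e : ℕ, Real.log e / (e:ℝ) ^ 2 with hCL
  have hCL0 : 0 ≤ CL := tsum_nonneg (fun e => by
    rcases Nat.eq_zero_or_pos e with rfl | he
    · simp
    · have : (1:ℝ) ≤ e := by exact_mod_cast he
      positivity)
  refine ⟨1 + (2 * (Real.pi ^ 2 / 6) + CL), by positivity, fun n hn => ?_⟩
  set LZ : ℝ := 6 / Real.pi ^ 2 with hLZ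
  have helper : ∑ e ∈ Icc 1 n, ((moebius e : ℝ) / (e:ℝ) ^ 2) *
        (∑ k ∈ Icc 1 (n / e), (1:ℝ) / k) =
      (∑ e ∈ Icc 1 n, ((moebius e : ℝ) / (e:ℝ) ^ 2) *
        ((∑ k ∈ Icc 1 (n / e), (1:ℝ) / k) - Real.log n)) +
      (∑ e ∈ Icc 1 n, (moebius e : ℝ) / (e:ℝ) ^ 2) * Real.log n := by
    rw [Finset.sum_mul, ← Finset.sum_add_distrib]
    exact Finset.sum_congr rfl fun e _ => by ring
  have key : Asum n - LZ * Real.log n =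
      (∑ e ∈ Icc 1 n, ((moebius e : ℝ) / (e:ℝ) ^ 2) *
        ((∑ k ∈ Icc 1 (n / e), (1:ℝ) / k) - Real.log n)) +
      ((∑ e ∈ Icc 1 n, (moebius e : ℝ) / (e:ℝ) ^ 2) - LZ) * Real.log n := by
    rw [AsumEq, helper]; ring
  have hlogn_nonneg : 0 ≤ Real.log n := Real.log_natCast_nonneg n
  have hlogn_le : Real.log n ≤ (n:ℝ) := by
    have := Real.log_le_sub_one_of_pos (x := (n:ℝ)) (by exact_mod_cast hn)
    linarith
  have hY : |((∑ e ∈ Icc 1 n, (moebius e : ℝ) / (e:ℝ) ^ 2) - LZ) * Real.log n| ≤ 1 := by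
    rw [abs_mul, abs_of_nonneg hlogn_nonneg]
    have h1 := moebiusPartial n hn
    calc |(∑ e ∈ Icc 1 n, (moebius e : ℝ) / (e:ℝ) ^ 2) - LZ| * Real.log n
        ≤ (1 / (n:ℝ)) * (n:ℝ) := by
          apply mul_le_mul h1 hlogn_le hlogn_nonneg (by positivity)
      _ ≤ 1 := by
          rw [one_div_mul_cancel (Nat.cast_ne_zero.2 (by omega) : (n:ℝ) ≠ 0)]
  have hX : |∑ e ∈ Icc 1 n, ((moebius e : ℝ) / (e:ℝ) ^ 2) *
        ((∑ k ∈ Icc 1 (n / e), (1:ℝ) / k) - Real.log n)|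
      ≤ 2 * (Real.pi ^ 2 / 6) + CL := by
    calc |∑ e ∈ Icc 1 n, ((moebius e : ℝ) / (e:ℝ) ^ 2) *
          ((∑ k ∈ Icc 1 (n / e), (1:ℝ) / k) - Real.log n)|
        ≤ ∑ e ∈ Icc 1 n, |((moebius e : ℝ) / (e:ℝ) ^ 2) *
          ((∑ k ∈ Icc 1 (n / e), (1:ℝ) / k) - Real.log n)| :=
          Finset.abs_sum_le_sum_abs _ _
      _ ≤ ∑ e ∈ Icc 1 n, (2 * (1 / (e:ℝ) ^ 2) + Real.log e / (e:ℝ) ^ 2) := by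
          refine Finset.sum_le_sum fun e he => ?_
          simp only [mem_Icc] at he
          obtain ⟨he1, hen⟩ := he
          have he0 : (0:ℝ) < (e:ℝ) := by exact_mod_cast he1
          set q : ℕ := n / e with hq
          have hq1 : 1 ≤ q := Nat.one_le_div_iff (by omega) |>.2 hen
          have hq0 : (0:ℝ) < (q:ℝ) := by exact_mod_cast hq1
          have hqn : q ≤ n := Nat.div_le_self n e
          have hnlt : n < e * q + e := by
            rw [hq]
            have h1 := Nat.div_add_mod n e
            have h2 := Nat.mod_lt n (show 0 < e by omega)
            omega
          -- |H q - log n| ≤ 2 + log e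
          have hHq := harmonicBound q hq1
          have hlq1 : Real.log q ≤ Real.log n :=
            Real.log_le_log hq0 (by exact_mod_cast hqn)
          have hlq2 : Real.log n ≤ Real.log e + 1 + Real.log q := by
            have hle : (n:ℝ) ≤ (e:ℝ) * (2 * q) := by
              have h3 : (n:ℝ) < (e:ℝ) * q + e := by exact_mod_cast hnlt
              have h4 : (1:ℝ) ≤ (q:ℝ) := by exact_mod_cast hq1
              nlinarith
            calc Real.log n ≤ Real.log ((e:ℝ) * (2 * q)) :=
                  Real.log_le_log (by exact_mod_cast hn) hle
              _ = Real.log e + (Real.log 2 + Real.log q) := by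
                  rw [Real.log_mul (by positivity) (by positivity),
                    Real.log_mul (by norm_num) (by positivity)]
              _ ≤ Real.log e + 1 + Real.log q := by
                  have := Real.log_le_sub_one_of_pos (x := (2:ℝ)) (by norm_num)
                  linarith
          have hloge : 0 ≤ Real.log (e:ℝ) := by
            rcases eq_or_lt_of_le he1 with h | h
            · simp [← h]
            · exact Real.log_nonneg (by exact_mod_cast he1)
          have habs : |(∑ k ∈ Icc 1 q, (1:ℝ) / k) - Real.log n| ≤ 2 + Real.log e := by
            rw [abs_le] at hHq ⊢
            constructor <;> nlinarith [hHq.1, hHq.2]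
          rw [abs_mul, abs_div, abs_pow, abs_of_nonneg (le_of_lt he0)]
          have hmu : |(moebius e : ℝ)| ≤ 1 := by
            exact_mod_cast abs_moebius_le_one (n := e)
          calc |(moebius e : ℝ)| / (e:ℝ) ^ 2 * |(∑ k ∈ Icc 1 q, (1:ℝ) / k) - Real.log n|
              ≤ 1 / (e:ℝ) ^ 2 * (2 + Real.log e) := by
                apply mul_le_mul (by gcongr) habs (abs_nonneg _) (by positivity)
            _ = 2 * (1 / (e:ℝ) ^ 2) + Real.log e / (e:ℝ) ^ 2 := by field_simp
      _ = 2 * (∑ e ∈ Icc 1 n, (1:ℝ) / (e:ℝ) ^ 2) + ∑ e ∈ Icc 1 n, Real.log e / (e:ℝ) ^ 2 := by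
          rw [Finset.sum_add_distrib, Finset.mul_sum]
      _ ≤ 2 * (Real.pi ^ 2 / 6) + CL := by
          have h1 := zetaPartial n
          have h2 : ∑ e ∈ Icc 1 n, Real.log e / (e:ℝ) ^ 2 ≤ CL := by
            refine Summable.sum_le_tsum _ (fun e he => ?_) logSummable
            rcases Nat.eq_zero_or_pos e with rfl | hepos
            · simp
            · have : (1:ℝ) ≤ e := by exact_mod_cast hepos
              positivity
          linarith
  rw [key]
  calc |_ + _| ≤ _ := abs_add_le _ _
    _ ≤ 1 + (2 * (Real.pi ^ 2 / 6) + CL) := by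
        rw [add_comm]
        exact add_le_add hY hX

noncomputable def S0 (n : ℕ) : ℝ :=
    ∑ a ∈ Icc 1 n, ∑ b ∈ range (a + 1), (Nat.gcd a b : ℝ)

lemma gauss (m : ℕ) : ∑ k ∈ Icc 1 m, (k:ℝ) = m * (m+1) / 2 := by
  induction m with
  | zero => simp
  | succ m ih =>
    rw [Finset.sum_Icc_succ_top (by omega), ih]
    push_cast; ring

lemma S0Eq (n : ℕ) : S0 n = (n:ℝ) * (n+1) / 2 +
    ∑ d ∈ Icc 1 n, (Nat.totient d : ℝ) *
      (((n/d : ℕ):ℝ) * (((n/d : ℕ):ℝ) + 1) / 2) := by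
  have h1 : S0 n = ∑ a ∈ Icc 1 n, ((a:ℝ) +
      ∑ d ∈ a.divisors, (fun (d k : ℕ) => (Nat.totient d : ℝ) * (k:ℝ)) d (a / d)) := by
    rw [S0]
    refine Finset.sum_congr rfl fun a ha => ?_
    simp only [mem_Icc] at ha
    have := congrArg (Nat.cast (R := ℝ)) (gcdRow a ha.1)
    push_cast at this
    rw [← Nat.cast_sum]
    push_cast
    exact this
  rw [h1, Finset.sum_add_distrib, gauss n,
    swapDvd (fun (d k : ℕ) => (Nat.totient d : ℝ) * (k:ℝ)) n]
  congr 1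
  refine Finset.sum_congr rfl fun d hd => ?_
  rw [← Finset.mul_sum, gauss]

lemma mainEst : ∃ C : ℝ, 0 ≤ C ∧ ∀ n : ℕ, 1 ≤ n →
    |S0 n - (3 / Real.pi ^ 2) * (n:ℝ) ^ 2 * Real.log n| ≤ C * (n:ℝ) ^ 2 := by
  obtain ⟨CA, hCA0, hCA⟩ := AsumBound
  refine ⟨2 + CA / 2, by positivity, fun n hn => ?_⟩
  have hn0 : (0:ℝ) < (n:ℝ) := by exact_mod_cast hn
  -- step 1
  have h1 : |S0 n - (n:ℝ) * (n+1) / 2 - ((n:ℝ)^2 / 2) * Asum n| ≤ (n:ℝ)^2 := by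
    have heq : S0 n - (n:ℝ) * (n+1) / 2 - ((n:ℝ)^2 / 2) * Asum n =
        ∑ d ∈ Icc 1 n, ((Nat.totient d : ℝ) *
          (((n/d : ℕ):ℝ) * (((n/d : ℕ):ℝ) + 1) / 2) -
          ((n:ℝ)^2 / 2) * ((Nat.totient d : ℝ) / (d:ℝ) ^ 2)) := by
      rw [S0Eq, Asum, Finset.mul_sum, Finset.sum_sub_distrib]
      ring
    rw [heq]
    calc |∑ d ∈ Icc 1 n, _| ≤ ∑ d ∈ Icc 1 n, |(Nat.totient d : ℝ) *
          (((n/d : ℕ):ℝ) * (((n/d : ℕ):ℝ) + 1) / 2) -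
          ((n:ℝ)^2 / 2) * ((Nat.totient d : ℝ) / (d:ℝ) ^ 2)| :=
        Finset.abs_sum_le_sum_abs _ _
      _ ≤ ∑ d ∈ Icc 1 n, (n:ℝ) := by
        refine Finset.sum_le_sum fun d hd => ?_
        simp only [mem_Icc] at hd
        obtain ⟨hd1, hdn⟩ := hd
        have hd0 : (0:ℝ) < (d:ℝ) := by exact_mod_cast hd1
        set q : ℕ := n / d with hqdef
        have hq1 : 1 ≤ q := Nat.one_le_div_iff (by omega) |>.2 hdn
        have hq0 : (1:ℝ) ≤ (q:ℝ) := by exact_mod_cast hq1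
        have hqle : (q:ℝ) ≤ (n:ℝ) / d := by
          rw [le_div_iff₀ hd0]
          exact_mod_cast Nat.div_mul_le_self n d
        have hqgt : (n:ℝ) / d < (q:ℝ) + 1 := by
          rw [div_lt_iff₀ hd0]
          have : n < d * q + d := by
            rw [hqdef]
            have h1 := Nat.div_add_mod n d
            have h2 := Nat.mod_lt n (show 0 < d by omega)
            omega
          have h5 : (n:ℝ) < (d:ℝ) * q + d := by exact_mod_cast this
          nlinarith
        have hphi : (Nat.totient d : ℝ) ≤ (d:ℝ) := by
          exact_mod_cast Nat.totient_le d
        have hphi0 : (0:ℝ) ≤ (Nat.totient d : ℝ) := by positivity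
        set x : ℝ := (n:ℝ) / d with hx
        have hxq : (n:ℝ)^2 / (d:ℝ)^2 = x^2 := by rw [hx]; ring
        have hkey : |(q:ℝ) * ((q:ℝ)+1) - x^2| ≤ 2 * x := by
          rw [abs_le]
          constructor <;> nlinarith
        calc |(Nat.totient d : ℝ) * ((q:ℝ) * ((q:ℝ) + 1) / 2) -
              ((n:ℝ)^2 / 2) * ((Nat.totient d : ℝ) / (d:ℝ) ^ 2)|
            = (Nat.totient d : ℝ) * |(q:ℝ) * ((q:ℝ)+1) - x^2| / 2 := by
              rw [show (Nat.totient d : ℝ) * ((q:ℝ) * ((q:ℝ) + 1) / 2) -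
                  ((n:ℝ)^2 / 2) * ((Nat.totient d : ℝ) / (d:ℝ) ^ 2) =
                  (Nat.totient d : ℝ) * ((q:ℝ) * ((q:ℝ)+1) - (n:ℝ)^2/(d:ℝ)^2) / 2 by ring,
                hxq, abs_div, abs_mul, abs_of_nonneg hphi0]
              norm_num
          _ ≤ (d:ℝ) * (2 * x) / 2 := by
              have hx0 : (0:ℝ) ≤ x := by rw [hx]; positivity
              gcongr
          _ = (n:ℝ) := by rw [hx]; field_simp
      _= (n:ℝ) * (n:ℝ) := by
          rw [Finset.sum_const, Nat.card_Icc]; simp [nsmul_eq_mul]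
      _ ≤ (n:ℝ)^2 := by nlinarith
  -- step 2
  have h2 : |(n:ℝ) * (n+1) / 2| ≤ (n:ℝ)^2 := by
    rw [abs_of_nonneg (by positivity)]
    have h1n : (1:ℝ) ≤ (n:ℝ) := by exact_mod_cast hn
    nlinarith
  -- step 3
  have h3 : |((n:ℝ)^2/2) * Asum n - (3 / Real.pi ^ 2) * (n:ℝ)^2 * Real.log n| ≤
      (CA / 2) * (n:ℝ)^2 := by
    have : ((n:ℝ)^2/2) * Asum n - (3 / Real.pi ^ 2) * (n:ℝ)^2 * Real.log n =
        ((n:ℝ)^2/2) * (Asum n - (6 / Real.pi ^ 2) * Real.log n) := by ring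
    rw [this, abs_mul, abs_of_nonneg (by positivity : (0:ℝ) ≤ (n:ℝ)^2/2)]
    calc (n:ℝ)^2/2 * |Asum n - (6 / Real.pi ^ 2) * Real.log n| ≤ (n:ℝ)^2/2 * CA := by
          gcongr
          exact hCA n hn
      _ = (CA / 2) * (n:ℝ)^2 := by ring
  calc |S0 n - (3 / Real.pi ^ 2) * (n:ℝ) ^ 2 * Real.log n|
      ≤ |S0 n - (n:ℝ) * (n+1) / 2 - ((n:ℝ)^2 / 2) * Asum n| + |(n:ℝ) * (n+1) / 2| +
        |((n:ℝ)^2/2) * Asum n - (3 / Real.pi ^ 2) * (n:ℝ)^2 * Real.log n| := by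
        have : S0 n - (3 / Real.pi ^ 2) * (n:ℝ) ^ 2 * Real.log n =
            (S0 n - (n:ℝ) * (n+1) / 2 - ((n:ℝ)^2 / 2) * Asum n) + ((n:ℝ) * (n+1) / 2) +
            (((n:ℝ)^2/2) * Asum n - (3 / Real.pi ^ 2) * (n:ℝ)^2 * Real.log n) := by ring
        rw [this]
        exact (abs_add_le _ _).trans (by gcongr; exact abs_add_le _ _)
    _ ≤ (n:ℝ)^2 + (n:ℝ)^2 + (CA/2) * (n:ℝ)^2 := by linarith
    _ = (2 + CA / 2) * (n:ℝ)^2 := by ring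

/-- As `n → ∞`, `Σ_{a=1}^{n} Σ_{b=0}^{a} gcd(a,b) ∼ n² log n / (2 ζ(2))`,
where `ζ(2) = π²/6`. -/
theorem gcd_sum_asymptotic :
    Tendsto
      (fun n : ℕ =>
        (∑ a ∈ Finset.Icc 1 n, ∑ b ∈ Finset.range (a + 1), (Nat.gcd a b : ℝ)) /
          ((n : ℝ) ^ 2 * Real.log n / (2 * (Real.pi ^ 2 / 6))))
      atTop (𝓝 1) := by
  obtain ⟨C, hC0, hC⟩ := mainEst
  set f : ℕ → ℝ := fun n =>
      (∑ a ∈ Finset.Icc 1 n, ∑ b ∈ Finset.range (a + 1), (Nat.gcd a b : ℝ)) /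
        ((n : ℝ) ^ 2 * Real.log n / (2 * (Real.pi ^ 2 / 6))) with hf
  have hpi : (0:ℝ) < Real.pi ^ 2 := by positivity
  have hsub : Tendsto (fun n : ℕ => f n - 1) atTop (𝓝 0) := by
    apply squeeze_zero_norm' (a := fun n : ℕ => C * Real.pi ^ 2 / (3 * Real.log n))
    · filter_upwards [eventually_ge_atTop 2] with n hn
      have hn1 : (1:ℝ) < (n:ℝ) := by exact_mod_cast hn
      have hlog : 0 < Real.log n := Real.log_pos hn1
      have hn0 : (0:ℝ) < (n:ℝ) := by linarith
      have hD : (n : ℝ) ^ 2 * Real.log n / (2 * (Real.pi ^ 2 / 6)) =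
          (3 / Real.pi ^ 2) * (n:ℝ) ^ 2 * Real.log n := by
        field_simp; ring
      have hDpos : 0 < (3 / Real.pi ^ 2) * (n:ℝ) ^ 2 * Real.log n := by positivity
      have hfn : f n - 1 = (S0 n - (3 / Real.pi ^ 2) * (n:ℝ) ^ 2 * Real.log n) /
          ((3 / Real.pi ^ 2) * (n:ℝ) ^ 2 * Real.log n) := by
        rw [hf]
        simp only
        rw [hD, S0]
        field_simp
      rw [Real.norm_eq_abs, hfn, abs_div, abs_of_pos hDpos]
      calc |S0 n - (3 / Real.pi ^ 2) * (n:ℝ) ^ 2 * Real.log n| /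
            ((3 / Real.pi ^ 2) * (n:ℝ) ^ 2 * Real.log n)
          ≤ (C * (n:ℝ) ^ 2) / ((3 / Real.pi ^ 2) * (n:ℝ) ^ 2 * Real.log n) := by
            gcongr
            exact hC n (by omega)
        _ = C * Real.pi ^ 2 / (3 * Real.log n) := by
            field_simp
    · have h1 : Tendsto (fun n : ℕ => Real.log n) atTop atTop :=
        Real.tendsto_log_atTop.comp tendsto_natCast_atTop_atTop
      have h2 : Tendsto (fun n : ℕ => (3 * Real.log n)) atTop atTop :=
        h1.const_mul_atTop (by norm_num)
      have h3 := h2.inv_tendsto_atTop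
      have := h3.const_mul (C * Real.pi ^ 2)
      simpa [div_eq_mul_inv] using this
  have := hsub.add_const 1
  simpa using this
end
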